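/- Let A ⊆ ℝ be an open invex set with respect to η : A × A → ℝ and a, b ∈ A with a < a + η(b,a), with f′ integrable on [a, a+η(b,a)]. If f : A → ℝ is differentiable and |f′| is preinvex with respect to η on A, then for every α > 0: |(f(a)+f(a+η(b,a)))/2 − (Γ(α+1)/(2 η(b,a)^α))[J_{a+}^α f(a+η(b,a)) + J_{(a+η(b,a))−}^α f(a)]| ≤ (η(b,a)/(2(α+1))) (1 − 1/2^α) (|f′(a)| + |f′(b)|). -/

import Mathlib

open MeasureTheory intervalIntegral

section helpers
open Set

lemma subst_aux (G : ℝ → ℝ) (a h : ℝ) :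
    ∫ x in a..(a+h), G x = h * ∫ t in (0:ℝ)..1, G (a + t * h) := by
  have H := intervalIntegral.smul_integral_comp_mul_add (a := (0:ℝ)) (b := 1) G h a
  simp only [smul_eq_mul, mul_zero, zero_add, mul_one] at H
  rw [show h + a = a + h by ring] at H
  rw [← H]
  congr 1
  apply intervalIntegral.integral_congr
  intro t _
  congr 1
  ring

lemma comp_integrable (g : ℝ → ℝ) (a h : ℝ) (hne : h ≠ 0)
    (hint : IntervalIntegrable g volume a (a+h)) :
    IntervalIntegrable (fun t => g (a + t * h)) volume 0 1 := by
  have h1 := hint.comp_add_left a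
  have h2 := h1.comp_mul_left (c := h)
  simp only [sub_self, add_sub_cancel_left, zero_div, div_self hne] at h2
  have : (fun t : ℝ => g (a + t * h)) = fun x : ℝ => g (a + h * x) := by
    funext t; rw [mul_comm]
  rw [this]
  exact h2

end helpers

/-- Riemann-Liouville left fractional integral `J_{a+}^α f(x)`. -/
noncomputable def JL (α a x : ℝ) (f : ℝ → ℝ) : ℝ :=
  (1 / Real.Gamma α) * ∫ t in a..x, (x - t) ^ (α - 1) * f t

/-- Riemann-Liouville right fractional integral `J_{b-}^α f(x)`. -/
noncomputable def JR (α x b : ℝ) (f : ℝ → ℝ) : ℝ :=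
  (1 / Real.Gamma α) * ∫ t in x..b, (t - x) ^ (α - 1) * f t

/-- `A` is invex with respect to `η`. -/
def InvexSet (A : Set ℝ) (η : ℝ → ℝ → ℝ) : Prop :=
  ∀ x ∈ A, ∀ y ∈ A, ∀ t ∈ Set.Icc (0:ℝ) 1, x + t * η y x ∈ A

/-- `f` is preinvex with respect to `η` on `A`. -/
def PreinvexOn (A : Set ℝ) (η : ℝ → ℝ → ℝ) (f : ℝ → ℝ) : Prop :=
  ∀ x ∈ A, ∀ y ∈ A, ∀ t ∈ Set.Icc (0:ℝ) 1,
    f (x + t * η y x) ≤ (1 - t) * f x + t * f y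

/-- Condition C of Mohan and Neogy. -/
def CondC (A : Set ℝ) (η : ℝ → ℝ → ℝ) : Prop :=
  ∀ x ∈ A, ∀ y ∈ A, ∀ t ∈ Set.Icc (0:ℝ) 1,
    η y (y + t * η x y) = -t * η x y ∧ η x (y + t * η x y) = (1 - t) * η x y

open Set
theorem fractional_estimate_abs_preinvex
    (A : Set ℝ) (η : ℝ → ℝ → ℝ) (a b : ℝ) (f : ℝ → ℝ) (α : ℝ)
    (hA : IsOpen A) (hinv : InvexSet A η) (ha : a ∈ A) (hb : b ∈ A)
    (hab : a < a + η b a)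
    (hdiff : ∀ x ∈ A, DifferentiableAt ℝ f x)
    (hint : IntervalIntegrable (deriv f) volume a (a + η b a))
    (hpre : PreinvexOn A η (fun x => |deriv f x|))
    (hα : 0 < α) :
    |(f a + f (a + η b a)) / 2 -
        Real.Gamma (α + 1) / (2 * (η b a) ^ α) *
          (JL α a (a + η b a) f + JR α a (a + η b a) f)| ≤
      η b a / (2 * (α + 1)) * (1 - 1 / 2 ^ α) * (|deriv f a| + |deriv f b|) := by
  set h : ℝ := η b a with hh
  have hh0 : 0 < h := by linarith
  have hhne : h ≠ 0 := ne_of_gt hh0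
  set c : ℝ := a + h with hc
  -- membership
  have mem : ∀ t ∈ Icc (0:ℝ) 1, a + t * h ∈ A := fun t ht => hinv a ha b hb t ht
  set D : ℝ → ℝ := fun t => deriv f (a + t * h) with hD
  set F : ℝ → ℝ := fun t => f (a + t * h) with hF
  -- derivative of F
  have Fd : ∀ t ∈ Icc (0:ℝ) 1, HasDerivAt F (D t * h) t := by
    intro t ht
    have h1 : HasDerivAt (fun s : ℝ => a + s * h) h t := by
      simpa using ((hasDerivAt_id t).mul_const h).const_add a
    have h2 := ((hdiff _ (mem t ht)).hasDerivAt).comp t h1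
    exact h2
  have Fc : ContinuousOn F (Icc 0 1) := fun t ht => ((Fd t ht).continuousAt).continuousWithinAt
  have Dint : IntervalIntegrable D volume 0 1 := comp_integrable _ a h hhne hint
  -- continuity of rpow pieces
  have cont1 : Continuous (fun t : ℝ => (1 - t) ^ α) :=
    (Real.continuous_rpow_const hα.le).comp (continuous_const.sub continuous_id)
  have cont2 : Continuous (fun t : ℝ => t ^ α) := Real.continuous_rpow_const hα.le
  set U : ℝ → ℝ := fun t => (1 - t) ^ α - t ^ α with hU
  have contU : Continuous U := cont1.sub cont2
  -- integrability of singular kernels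
  have int1 : IntervalIntegrable (fun t : ℝ => (1 - t) ^ (α - 1)) volume 0 1 := by
    have := (intervalIntegrable_rpow' (a := 0) (b := 1) (r := α - 1) (by linarith)).comp_sub_left 1
    simpa using this.symm
  have int2 : IntervalIntegrable (fun t : ℝ => t ^ (α - 1)) volume 0 1 :=
    intervalIntegrable_rpow' (by linarith)
  have uIcc01 : uIcc (0:ℝ) 1 = Icc 0 1 := uIcc_of_le zero_le_one
  have int1F : IntervalIntegrable (fun t : ℝ => (1 - t) ^ (α - 1) * F t) volume 0 1 :=
    int1.mul_continuousOn (by rw [uIcc01]; exact Fc)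
  have int2F : IntervalIntegrable (fun t : ℝ => t ^ (α - 1) * F t) volume 0 1 :=
    int2.mul_continuousOn (by rw [uIcc01]; exact Fc)
  set I1 : ℝ := ∫ t in (0:ℝ)..1, (1 - t) ^ (α - 1) * F t with hI1
  set I2 : ℝ := ∫ t in (0:ℝ)..1, t ^ (α - 1) * F t with hI2
  set J : ℝ := ∫ t in (0:ℝ)..1, U t * D t with hJ
  -- Step 1: JL and JR via substitution
  have hmul : h * h ^ (α - 1) = h ^ α := by
    have e := Real.rpow_add hh0 1 (α - 1)
    rw [Real.rpow_one] at e
    rw [show 1 + (α - 1) = α by ring] at e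
    exact e.symm
  have hJL : JL α a c f = (1 / Real.Gamma α) * (h ^ α * I1) := by
    have e1 : ∫ x in a..c, (c - x) ^ (α - 1) * f x
        = h * ∫ t in (0:ℝ)..1, (c - (a + t * h)) ^ (α - 1) * f (a + t * h) := by
      rw [hc]; exact subst_aux (fun x => (c - x) ^ (α - 1) * f x) a h
    have e2 : ∫ t in (0:ℝ)..1, (c - (a + t * h)) ^ (α - 1) * f (a + t * h)
        = h ^ (α - 1) * I1 := by
      rw [hI1, ← intervalIntegral.integral_const_mul]
      apply intervalIntegral.integral_congr
      intro t ht
      rw [uIcc01] at ht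
      have h1t : (0:ℝ) ≤ 1 - t := by linarith [ht.2]
      have e3 : c - (a + t * h) = h * (1 - t) := by rw [hc]; ring
      show (c - (a + t * h)) ^ (α - 1) * f (a + t * h)
          = h ^ (α - 1) * ((1 - t) ^ (α - 1) * F t)
      rw [e3, Real.mul_rpow hh0.le h1t, hF]; ring
    rw [JL, e1, e2, ← hmul]; ring
  have hJR : JR α a c f = (1 / Real.Gamma α) * (h ^ α * I2) := by
    have e1 : ∫ x in a..c, (x - a) ^ (α - 1) * f x
        = h * ∫ t in (0:ℝ)..1, ((a + t * h) - a) ^ (α - 1) * f (a + t * h) := by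
      rw [hc]; exact subst_aux (fun x => (x - a) ^ (α - 1) * f x) a h
    have e2 : ∫ t in (0:ℝ)..1, ((a + t * h) - a) ^ (α - 1) * f (a + t * h)
        = h ^ (α - 1) * I2 := by
      rw [hI2, ← intervalIntegral.integral_const_mul]
      apply intervalIntegral.integral_congr
      intro t ht
      rw [uIcc01] at ht
      have e3 : (a + t * h) - a = h * t := by ring
      show ((a + t * h) - a) ^ (α - 1) * f (a + t * h)
          = h ^ (α - 1) * (t ^ (α - 1) * F t)
      rw [e3, Real.mul_rpow hh0.le ht.1, hF]; ring
    rw [JR, e1, e2, ← hmul]; ring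
  -- integrability pieces for IBP
  have intB1 : IntervalIntegrable (fun t : ℝ => D t * ((1 - t) ^ α * h)) volume 0 1 :=
    Dint.mul_continuousOn ((cont1.mul continuous_const).continuousOn)
  have intB2 : IntervalIntegrable (fun t : ℝ => D t * (t ^ α * h)) volume 0 1 :=
    Dint.mul_continuousOn ((cont2.mul continuous_const).continuousOn)
  -- Step 2: integration by parts identity
  have ibp1 : ∫ t in (0:ℝ)..1, ((1 - t) ^ (α - 1) * F t * (-α) + D t * ((1 - t) ^ α * h))
      = - f a := by
    have := intervalIntegral.integral_eq_sub_of_hasDeriv_right_of_le (a := 0) (b := 1)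
      (f := fun t => (1 - t) ^ α * F t)
      (f' := fun t => (1 - t) ^ (α - 1) * F t * (-α) + D t * ((1 - t) ^ α * h))
      zero_le_one
      (cont1.continuousOn.mul Fc)
      (by
        intro t ht
        have h1t : (1:ℝ) - t ≠ 0 := by intro e; rw [sub_eq_zero] at e; linarith [ht.2]
        have d1 : HasDerivAt (fun s : ℝ => (1 - s) ^ α) (α * (1 - t) ^ (α - 1) * (-1)) t := by
          have inner : HasDerivAt (fun s : ℝ => 1 - s) (-1) t := by
            simpa using (hasDerivAt_id t).const_sub 1
          exact (Real.hasDerivAt_rpow_const (Or.inl h1t)).comp t inner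
        have d2 := Fd t (Set.mem_Icc.2 ⟨ht.1.le, ht.2.le⟩)
        have d := d1.mul d2
        apply HasDerivAt.hasDerivWithinAt
        refine d.congr_deriv ?_
        rw [hD]
        ring)
      ((int1F.mul_const (-α)).add intB1)
    rw [this]
    show ((1:ℝ) - 1) ^ α * F 1 - ((1:ℝ) - 0) ^ α * F 0 = - f a
    have v1 : ((1:ℝ) - 1) ^ α * F 1 = 0 := by
      rw [sub_self, Real.zero_rpow (ne_of_gt hα)]; ring
    have v0 : ((1:ℝ) - 0) ^ α * F 0 = f a := by
      rw [sub_zero, Real.one_rpow, hF]; norm_num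
    rw [v1, v0]; ring
  have ibp2 : ∫ t in (0:ℝ)..1, (t ^ (α - 1) * F t * α + D t * (t ^ α * h))
      = f c := by
    have := intervalIntegral.integral_eq_sub_of_hasDeriv_right_of_le (a := 0) (b := 1)
      (f := fun t => t ^ α * F t)
      (f' := fun t => t ^ (α - 1) * F t * α + D t * (t ^ α * h))
      zero_le_one
      (cont2.continuousOn.mul Fc)
      (by
        intro t ht
        have htne : t ≠ 0 := ne_of_gt ht.1
        have d1 : HasDerivAt (fun s : ℝ => s ^ α) (α * t ^ (α - 1)) t :=
          Real.hasDerivAt_rpow_const (Or.inl htne)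
        have d2 := Fd t (Set.mem_Icc.2 ⟨ht.1.le, ht.2.le⟩)
        have d := d1.mul d2
        apply HasDerivAt.hasDerivWithinAt
        refine d.congr_deriv ?_
        rw [hD]
        ring)
      ((int2F.mul_const α).add intB2)
    rw [this]
    show (1:ℝ) ^ α * F 1 - (0:ℝ) ^ α * F 0 = f c
    have v1 : (1:ℝ) ^ α * F 1 = f c := by
      rw [Real.one_rpow, hF, hc]; norm_num
    have v0 : (0:ℝ) ^ α * F 0 = 0 := by
      rw [Real.zero_rpow (ne_of_gt hα)]; ring
    rw [v1, v0]; ring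
  have e1 : ∫ t in (0:ℝ)..1, D t * ((1 - t) ^ α * h) = - f a + α * I1 := by
    have := intervalIntegral.integral_add (int1F.mul_const (-α)) intB1
    rw [ibp1] at this
    rw [intervalIntegral.integral_mul_const, ← hI1] at this
    linarith
  have e2 : ∫ t in (0:ℝ)..1, D t * (t ^ α * h) = f c - α * I2 := by
    have := intervalIntegral.integral_add (int2F.mul_const α) intB2
    rw [ibp2] at this
    rw [intervalIntegral.integral_mul_const, ← hI2] at this
    linarith
  have key : α * (I1 + I2) = f a + f c + h * J := by
    have hsplit : ∫ t in (0:ℝ)..1, (D t * ((1 - t) ^ α * h) - D t * (t ^ α * h))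
        = (- f a + α * I1) - (f c - α * I2) := by
      rw [intervalIntegral.integral_sub intB1 intB2, e1, e2]
    have hJ' : h * J = ∫ t in (0:ℝ)..1, (D t * ((1 - t) ^ α * h) - D t * (t ^ α * h)) := by
      rw [hJ, ← intervalIntegral.integral_const_mul]
      apply intervalIntegral.integral_congr
      intro t _
      show h * (U t * D t) = _
      rw [hU]; ring
    rw [hsplit] at hJ'
    linarith
  -- Step 3: rewrite LHS as (h/2)*|J|
  have hGamma : Real.Gamma (α + 1) = α * Real.Gamma α := Real.Gamma_add_one (ne_of_gt hα)
  have hGpos : 0 < Real.Gamma α := Real.Gamma_pos_of_pos hα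
  have hpow : (0:ℝ) < h ^ α := Real.rpow_pos_of_pos hh0 α
  have lhs_eq : (f a + f c) / 2 -
      Real.Gamma (α + 1) / (2 * h ^ α) * (JL α a c f + JR α a c f) = -(h * J) / 2 := by
    have hGne : Real.Gamma α ≠ 0 := ne_of_gt hGpos
    have hpne : h ^ α ≠ 0 := ne_of_gt hpow
    have estep : Real.Gamma (α + 1) / (2 * h ^ α) * (JL α a c f + JR α a c f)
        = α * (I1 + I2) / 2 := by
      rw [hJL, hJR, hGamma]
      field_simp
    rw [estep, key]
    ring
  rw [lhs_eq]
  -- Step 4: bound |J|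
  set c1 : ℝ := |deriv f a| with hc1
  set c2 : ℝ := |deriv f b| with hc2
  have absD : ∀ t ∈ Icc (0:ℝ) 1, |D t| ≤ (1 - t) * c1 + t * c2 := by
    intro t ht
    exact hpre a ha b hb t ht
  have b1 : |J| ≤ ∫ t in (0:ℝ)..1, |U t| * |D t| := by
    calc |J| ≤ ∫ t in (0:ℝ)..1, |U t * D t| :=
          intervalIntegral.abs_integral_le_integral_abs zero_le_one
      _ = ∫ t in (0:ℝ)..1, |U t| * |D t| := by
          apply intervalIntegral.integral_congr
          intro t _
          exact abs_mul _ _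
  have intUD : IntervalIntegrable (fun t : ℝ => |U t| * |D t|) volume 0 1 :=
    Dint.abs.continuousOn_mul contU.abs.continuousOn
  have contW : Continuous (fun t : ℝ => (1 - t) * c1 + t * c2) :=
    ((continuous_const.sub continuous_id).mul continuous_const).add
      (continuous_id.mul continuous_const)
  have intR : IntervalIntegrable (fun t : ℝ => |U t| * ((1 - t) * c1 + t * c2)) volume 0 1 :=
    (contU.abs.mul contW).intervalIntegrable 0 1
  have b2 : (∫ t in (0:ℝ)..1, |U t| * |D t|)
      ≤ ∫ t in (0:ℝ)..1, |U t| * ((1 - t) * c1 + t * c2) :=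
    intervalIntegral.integral_mono_on zero_le_one intUD intR
      (fun t ht => mul_le_mul_of_nonneg_left (absD t ht) (abs_nonneg _))
  -- explicit integral computations
  set p : ℝ := (1/2 : ℝ) ^ (α + 1) with hp
  have hα1 : (0:ℝ) < α + 1 := by linarith
  have irpow : ∀ u v : ℝ, ∫ x in u..v, x ^ α = (v ^ (α + 1) - u ^ (α + 1)) / (α + 1) :=
    fun u v => integral_rpow (Or.inl (by linarith))
  have A2 : ∫ x in (0:ℝ)..(1/2 : ℝ), x ^ α = p / (α + 1) := by
    rw [irpow, Real.zero_rpow (ne_of_gt hα1), hp]; ring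
  have A1 : ∫ x in (1/2 : ℝ)..1, x ^ α = (1 - p) / (α + 1) := by
    rw [irpow, Real.one_rpow, hp]
  have comp_half1 : ∫ t in (0:ℝ)..(1/2 : ℝ), (1 - t) ^ α = ∫ x in (1/2 : ℝ)..1, x ^ α := by
    have := intervalIntegral.integral_comp_sub_left (a := (0:ℝ)) (b := 1/2)
      (fun x : ℝ => x ^ α) 1
    norm_num at this ⊢
    exact this
  have comp_half2 : ∫ t in (1/2 : ℝ)..1, (1 - t) ^ α = ∫ x in (0:ℝ)..(1/2 : ℝ), x ^ α := by
    have := intervalIntegral.integral_comp_sub_left (a := (1/2:ℝ)) (b := 1)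
      (fun x : ℝ => x ^ α) 1
    norm_num at this ⊢
    exact this
  have Tleft : ∫ t in (0:ℝ)..(1/2 : ℝ), |U t| = (1 - 2 * p) / (α + 1) := by
    have e : ∫ t in (0:ℝ)..(1/2 : ℝ), |U t| = ∫ t in (0:ℝ)..(1/2 : ℝ), ((1 - t) ^ α - t ^ α) := by
      apply intervalIntegral.integral_congr
      intro t ht
      rw [uIcc_of_le (by norm_num : (0:ℝ) ≤ 1/2)] at ht
      have hle : t ^ α ≤ (1 - t) ^ α :=
        Real.rpow_le_rpow ht.1 (by linarith [ht.2]) hα.le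
      show |(1 - t) ^ α - t ^ α| = (1 - t) ^ α - t ^ α
      exact abs_of_nonneg (by linarith)
    rw [e, intervalIntegral.integral_sub (cont1.intervalIntegrable 0 (1/2))
      (cont2.intervalIntegrable 0 (1/2)), comp_half1, A1, A2]
    ring
  have Tright : ∫ t in (1/2 : ℝ)..1, |U t| = (1 - 2 * p) / (α + 1) := by
    have e : ∫ t in (1/2 : ℝ)..1, |U t| = ∫ t in (1/2 : ℝ)..1, (t ^ α - (1 - t) ^ α) := by
      apply intervalIntegral.integral_congr
      intro t ht
      rw [uIcc_of_le (by norm_num : (1/2:ℝ) ≤ 1)] at ht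
      have hle : (1 - t) ^ α ≤ t ^ α :=
        Real.rpow_le_rpow (by linarith [ht.2]) (by linarith [ht.1]) hα.le
      show |(1 - t) ^ α - t ^ α| = t ^ α - (1 - t) ^ α
      rw [abs_sub_comm]
      exact abs_of_nonneg (by linarith)
    rw [e, intervalIntegral.integral_sub (cont2.intervalIntegrable (1/2) 1)
      (cont1.intervalIntegrable (1/2) 1), comp_half2, A1, A2]
    ring
  have T : ∫ t in (0:ℝ)..1, |U t| = 2 * ((1 - 2 * p) / (α + 1)) := by
    rw [← intervalIntegral.integral_add_adjacent_intervals
      (contU.abs.intervalIntegrable 0 (1/2)) (contU.abs.intervalIntegrable (1/2) 1),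
      Tleft, Tright]
    ring
  have intW1 : IntervalIntegrable (fun t : ℝ => |U t| * (1 - t)) volume 0 1 :=
    (contU.abs.mul (continuous_const.sub continuous_id)).intervalIntegrable 0 1
  have intW2 : IntervalIntegrable (fun t : ℝ => |U t| * t) volume 0 1 :=
    (contU.abs.mul continuous_id).intervalIntegrable 0 1
  have symmW : ∫ t in (0:ℝ)..1, |U t| * (1 - t) = ∫ t in (0:ℝ)..1, |U t| * t := by
    have huf : ∀ t : ℝ, |U (1 - t)| = |U t| := by
      intro t
      show |(1 - (1 - t)) ^ α - (1 - t) ^ α| = |(1 - t) ^ α - t ^ α|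
      rw [show (1:ℝ) - (1 - t) = t by ring]
      exact abs_sub_comm _ _
    have hcs := intervalIntegral.integral_comp_sub_left (a := (0:ℝ)) (b := 1)
      (fun s : ℝ => |U s| * s) 1
    norm_num at hcs
    calc ∫ t in (0:ℝ)..1, |U t| * (1 - t)
        = ∫ t in (0:ℝ)..1, |U (1 - t)| * (1 - t) :=
          intervalIntegral.integral_congr (fun t _ => by rw [huf])
      _ = ∫ t in (0:ℝ)..1, |U t| * t := hcs
  have Wsum : (∫ t in (0:ℝ)..1, |U t| * (1 - t)) + (∫ t in (0:ℝ)..1, |U t| * t)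
      = ∫ t in (0:ℝ)..1, |U t| := by
    rw [← intervalIntegral.integral_add intW1 intW2]
    apply intervalIntegral.integral_congr
    intro t _
    ring
  have w2 : ∫ t in (0:ℝ)..1, |U t| * t = (1 - 2 * p) / (α + 1) := by
    have h2 : 2 * ∫ t in (0:ℝ)..1, |U t| * t = 2 * ((1 - 2 * p) / (α + 1)) := by
      rw [← T, ← Wsum, symmW]; ring
    linarith
  have Sval : ∫ t in (0:ℝ)..1, |U t| * ((1 - t) * c1 + t * c2)
      = (c1 + c2) * ((1 - 2 * p) / (α + 1)) := by
    have expand : ∫ t in (0:ℝ)..1, |U t| * ((1 - t) * c1 + t * c2)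
        = (∫ t in (0:ℝ)..1, |U t| * (1 - t)) * c1 + (∫ t in (0:ℝ)..1, |U t| * t) * c2 := by
      rw [← intervalIntegral.integral_mul_const, ← intervalIntegral.integral_mul_const,
        ← intervalIntegral.integral_add (intW1.mul_const c1) (intW2.mul_const c2)]
      apply intervalIntegral.integral_congr
      intro t _
      ring
    rw [expand, symmW, w2]
    ring
  have chain : |J| ≤ (c1 + c2) * ((1 - 2 * p) / (α + 1)) := by
    rw [← Sval]
    exact le_trans b1 b2
  have pval : 2 * p = 1 / 2 ^ α := by
    rw [hp, Real.rpow_add (by norm_num : (0:ℝ) < 1/2), Real.rpow_one,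
      show (1/2 : ℝ) = 2⁻¹ by norm_num, Real.inv_rpow (by norm_num : (0:ℝ) ≤ 2)]
    field_simp
  have habs : |(-(h * J)) / 2| = h * |J| / 2 := by
    rw [abs_div, abs_neg, abs_mul, abs_of_pos hh0]
    norm_num
  calc |(-(h * J)) / 2| = h * |J| / 2 := habs
    _ ≤ h * ((c1 + c2) * ((1 - 2 * p) / (α + 1))) / 2 := by gcongr
    _ = h / (2 * (α + 1)) * (1 - 2 * p) * (c1 + c2) := by field_simp
    _ = h / (2 * (α + 1)) * (1 - 1 / 2 ^ α) * (c1 + c2) := by rw [pval]
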